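/- Let (X,d,μ) be an η-Ahlfors regular quasi-metric measure space with η > 0, triangular constant κ ≥ 1 and Ahlfors constants 0 < a ≤ A < ∞, and let ρ be the third order hypermetric induced by d. Let φ : (0,∞) → [0,∞) be nonincreasing and set λ = (1 + A²(2κ)^{2η})^{1/(2η)} / a^{1/η}. Then for every x ∈ X, ∬_{X×X} φ(ρ(x,y,z)) dμ(y) dμ(z) ≥ (1 / (λ^{4η} log λ)) · ∫₀^∞ φ(t) t^{2η−1} dt. -/

import Mathlib

open MeasureTheory ENNReal

/-- The third order hypermetric induced by `d`:
`ρ(x,y,z) = inf_{u ∈ X} max {d(x,u), d(y,u), d(z,u)}`. -/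
noncomputable def hyperRho {X : Type*} (d : X → X → ℝ) (x y z : X) : ℝ :=
  ⨅ u : X, max (d x u) (max (d y u) (d z u))

/-- `d` is a quasi-metric on `X` with triangular constant `κ`. -/
def IsQuasiMetric {X : Type*} (d : X → X → ℝ) (κ : ℝ) : Prop :=
  (∀ x y, 0 ≤ d x y) ∧ (∀ x y, (d x y = 0 ↔ x = y)) ∧ (∀ x y, d x y = d y x) ∧
    (∀ x y z, d x z ≤ κ * (d x y + d y z))

/-- `(X,d,μ)` is `η`-Ahlfors regular with constants `a ≤ A`. -/
def IsAhlfors {X : Type*} [MeasurableSpace X] (d : X → X → ℝ) (μ : Measure X)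
    (η a A : ℝ) : Prop :=
  ∀ x : X, ∀ r : ℝ, 0 < r →
    ENNReal.ofReal (a * r ^ η) ≤ μ {y | d x y < r} ∧
      μ {y | d x y < r} ≤ ENNReal.ofReal (A * r ^ η)


private lemma aux_log (s : ℝ) (hs : 1 < s) : s - 1 ≤ s * Real.log s := by
  have h1 : Real.log s⁻¹ ≤ s⁻¹ - 1 := Real.log_le_sub_one_of_pos (by positivity)
  rw [Real.log_inv] at h1
  have hs0 : (0:ℝ) < s := by linarith
  have h2 : s * s⁻¹ = 1 := mul_inv_cancel₀ hs0.ne'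
  nlinarith [mul_le_mul_of_nonneg_left h1 hs0.le]

private lemma aux_main (η F R s lg : ℝ) (hη : 0 < η) (hR : 0 < R) (hF : 0 ≤ F)
    (hlg : 0 < lg) (hs : 1 < s) (hslog : s - 1 ≤ s * (2*η*lg)) :
    1/(s*s*lg) * (F * ((R*s*s - R*s)/(2*η))) ≤ F * R := by
  have h2η : (0:ℝ) < 2*η := by linarith
  have hs0 : (0:ℝ) < s := by linarith
  have h6 : (R*s*s - R*s)/(2*η) ≤ (s*s*lg) * R := by
    rw [div_le_iff₀ h2η]
    nlinarith [mul_le_mul_of_nonneg_left hslog (mul_nonneg hR.le hs0.le)]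
  have hcpos : (0:ℝ) < s*s*lg := by positivity
  rw [one_div, inv_mul_le_iff₀ hcpos]
  nlinarith [mul_le_mul_of_nonneg_left h6 hF]

set_option maxHeartbeats 1000000 in
/-- Lower bound: with `λ = (1 + A²(2κ)^{2η})^{1/(2η)} / a^{1/η}`, for every `x`,
`∬ φ(ρ(x,y,z)) dμ dμ ≥ (1/(λ^{4η} log λ)) ∫₀^∞ φ(t) t^{2η-1} dt`. -/
theorem statement11 {X : Type*} [MeasurableSpace X]
    (d : X → X → ℝ) (κ : ℝ) (hκ : 1 ≤ κ) (hqm : IsQuasiMetric d κ)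
    (hd_meas : Measurable fun p : X × X => d p.1 p.2)
    (μ : Measure X) (η : ℝ) (hη : 0 < η)
    (a A : ℝ) (ha : 0 < a) (haA : a ≤ A) (hAhl : IsAhlfors d μ η a A)
    (φ : ℝ → ℝ) (hφ_nonneg : ∀ t, 0 < t → 0 ≤ φ t)
    (hφ_mono : ∀ s t, 0 < s → s ≤ t → φ t ≤ φ s)
    (l : ℝ) (hl : l = (1 + A ^ 2 * (2 * κ) ^ (2 * η)) ^ (1 / (2 * η)) / a ^ (1 / η))
    (x : X) :
    ENNReal.ofReal (1 / (l ^ (4 * η) * Real.log l)) *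
        ∫⁻ t in Set.Ioi (0 : ℝ), ENNReal.ofReal (φ t * t ^ (2 * η - 1)) ≤
      ∫⁻ y, ∫⁻ z, ENNReal.ofReal (φ (hyperRho d x y z)) ∂μ ∂μ := by
  classical
  obtain ⟨hd0, hdeq, hdsym, hdtri⟩ := hqm
  have hA : 0 < A := lt_of_lt_of_le ha haA
  have h2η : (0:ℝ) < 2 * η := by linarith
  have hκ0 : (0:ℝ) < κ := by linarith
  have hone : (1:ℝ) ≤ (2*κ) ^ (2*η) := Real.one_le_rpow (by linarith) h2η.le
  have hP1 : (1:ℝ) < 1 + A ^ 2 * (2*κ) ^ (2*η) := by nlinarith [sq_nonneg A]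
  have hP0 : (0:ℝ) < 1 + A ^ 2 * (2*κ) ^ (2*η) := by linarith
  have hl0 : 0 < l := by
    rw [hl]
    exact div_pos (Real.rpow_pos_of_pos hP0 _) (Real.rpow_pos_of_pos ha _)
  -- `l ^ (2η) = P / a ^ 2`
  have hpow2 : ∀ u : ℝ, 0 ≤ u → (u ^ η) ^ 2 = u ^ (2*η) := by
    intro u hu
    rw [← Real.rpow_natCast (u ^ η) 2, ← Real.rpow_mul hu]
    norm_num [mul_comm]
  have hl2η : l ^ (2*η) = (1 + A ^ 2 * (2*κ) ^ (2*η)) / a ^ 2 := by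
    rw [hl, Real.div_rpow (Real.rpow_nonneg hP0.le _) (Real.rpow_nonneg ha.le _)]
    congr 1
    · have h1 : 1 / (2*η) * (2*η) = 1 := by field_simp
      rw [← Real.rpow_mul hP0.le, h1, Real.rpow_one]
    · rw [← Real.rpow_mul ha.le]
      have h2 : 1 / η * (2*η) = 2 := by field_simp
      rw [h2, show (2:ℝ) = ((2:ℕ):ℝ) by norm_num, Real.rpow_natCast]
  have hKey : a ^ 2 * l ^ (2*η) = 1 + A ^ 2 * (2*κ) ^ (2*η) := by
    rw [hl2η]; field_simp
  have hs1 : 1 < l ^ (2*η) := by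
    rw [hl2η, lt_div_iff₀ (by positivity)]
    nlinarith [sq_nonneg A, sq_nonneg a, mul_le_mul_of_nonneg_left hone (sq_nonneg A)]
  have hL1 : 1 < l := by
    by_contra h
    push_neg at h
    have := Real.rpow_le_one hl0.le h h2η.le
    linarith
  have hlogl : 0 < Real.log l := Real.log_pos hL1
  -- radii
  set r : ℤ → ℝ := fun k => l ^ k with hrdef
  have hrpos : ∀ k, 0 < r k := fun k => zpow_pos hl0 k
  have hrsucc : ∀ k, r (k+1) = r k * l := fun k => zpow_add_one₀ hl0.ne' k
  have hrlt : ∀ k, r k < r (k+1) := by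
    intro k; rw [hrsucc]; nlinarith [hrpos k]
  have hrmono : ∀ {k m : ℤ}, k ≤ m → r k ≤ r m := fun h => zpow_le_zpow_right₀ hL1.le h
  -- balls
  set B : ℤ → Set X := fun k => {y | d x y < r k} with hBdef
  have hdx : Measurable fun y => d x y := hd_meas.comp (measurable_const.prodMk measurable_id)
  have hBm : ∀ k, MeasurableSet (B k) := fun k => measurableSet_lt hdx measurable_const
  have hBsub : ∀ k, B k ⊆ B (k+1) := fun k y hy => lt_trans hy (hrlt k)
  set D : ℤ → Set X := fun k => B (k+1) \ B k with hDdef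
  have hDm : ∀ k, MeasurableSet (D k) := fun k => (hBm _).diff (hBm _)
  have hlow : ∀ k, ENNReal.ofReal (a * r k ^ η) ≤ μ (B k) := fun k => (hAhl x (r k) (hrpos k)).1
  have hup : ∀ k, μ (B k) ≤ ENNReal.ofReal (A * r k ^ η) := fun k => (hAhl x (r k) (hrpos k)).2
  have hBfin : ∀ k, μ (B k) ≠ ⊤ := fun k => (lt_of_le_of_lt (hup k) ofReal_lt_top).ne
  have hDfin : ∀ k, μ (D k) ≠ ⊤ := fun k =>
    (lt_of_le_of_lt (le_trans (measure_mono Set.diff_subset) (hup (k+1))) ofReal_lt_top).ne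
  have hμsplit : ∀ k, μ (B k) + μ (D k) = μ (B (k+1)) := by
    intro k
    rw [← measure_union Set.disjoint_sdiff_right (hDm k), Set.union_diff_cancel (hBsub k)]
  -- the key per-scale measure estimate
  have hI : ∀ k, ENNReal.ofReal (r k ^ (2*η)) ≤ μ (D k) * (μ (B k) + μ (B (k+1))) := by
    intro k
    have h5 : 0 ≤ r k ^ (2*η) := Real.rpow_nonneg (hrpos k).le _
    have hreal : r k ^ (2*η) + (A * r k ^ η)^2 ≤ (a * r (k+1) ^ η)^2 := by
      have h1 : (A * r k ^ η)^2 = A^2 * ((r k ^ η)^2) := by ring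
      have h2 : (a * r (k+1) ^ η)^2 = a^2 * ((r (k+1) ^ η)^2) := by ring
      rw [h1, h2, hpow2 _ (hrpos k).le, hpow2 _ (hrpos (k+1)).le]
      have h3 : r (k+1) ^ (2*η) = r k ^ (2*η) * l ^ (2*η) := by
        rw [hrsucc, Real.mul_rpow (hrpos k).le hl0.le]
      rw [h3]
      have h4 : a^2 * (r k ^ (2*η) * l ^ (2*η)) = (1 + A ^ 2 * (2*κ) ^ (2*η)) * r k ^ (2*η) := by
        rw [← hKey]; ring
      rw [h4]
      nlinarith [mul_le_mul_of_nonneg_left hone (mul_nonneg (sq_nonneg A) h5)]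
    have hβ := hup k
    have hγ := hlow (k+1)
    have hadd := hμsplit k
    have e1 : μ (B k) * μ (B k) ≤ ENNReal.ofReal ((A * r k ^ η)^2) := by
      rw [sq, ENNReal.ofReal_mul (mul_nonneg hA.le (Real.rpow_nonneg (hrpos k).le _))]
      exact mul_le_mul' hβ hβ
    have e2 : ENNReal.ofReal ((a * r (k+1) ^ η)^2) ≤ μ (B (k+1)) * μ (B (k+1)) := by
      rw [sq, ENNReal.ofReal_mul (mul_nonneg ha.le (Real.rpow_nonneg (hrpos (k+1)).le _))]
      exact mul_le_mul' hγ hγ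
    have e3 : ENNReal.ofReal (r k ^ (2*η)) + μ (B k) * μ (B k) ≤
        μ (B (k+1)) * μ (B (k+1)) := by
      calc ENNReal.ofReal (r k ^ (2*η)) + μ (B k) * μ (B k)
          ≤ ENNReal.ofReal (r k ^ (2*η)) + ENNReal.ofReal ((A * r k ^ η)^2) :=
            add_le_add le_rfl e1
        _ = ENNReal.ofReal (r k ^ (2*η) + (A * r k ^ η)^2) :=
            (ENNReal.ofReal_add h5 (sq_nonneg _)).symm
        _ ≤ ENNReal.ofReal ((a * r (k+1) ^ η)^2) := ENNReal.ofReal_le_ofReal hreal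
        _ ≤ μ (B (k+1)) * μ (B (k+1)) := e2
    have e4 : μ (B (k+1)) * μ (B (k+1)) =
        μ (B k) * μ (B k) + μ (D k) * (μ (B k) + μ (B (k+1))) := by
      rw [← hadd]; ring
    rw [e4, add_comm (ENNReal.ofReal (r k ^ (2*η)))] at e3
    exact (ENNReal.add_le_add_iff_left (ENNReal.mul_ne_top (hBfin k) (hBfin k))).mp e3
  -- the summand functions
  set c : ℤ → ℝ≥0∞ := fun k => ENNReal.ofReal (φ (r (k+1))) with hcdef
  set u : ℤ → ℝ≥0∞ := fun k => ENNReal.ofReal (φ (r (k+1)) * r k ^ (2*η)) with hudef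
  have hu_eq : ∀ k, u k = c k * ENNReal.ofReal (r k ^ (2*η)) := fun k =>
    ENNReal.ofReal_mul (hφ_nonneg _ (hrpos _))
  set g : ℤ → X → X → ℝ≥0∞ := fun k y z =>
    c k * ((B k).indicator 1 y * (D k).indicator 1 z +
      (D k).indicator 1 y * (B (k+1)).indicator 1 z) with hgdef
  have hind1 : ∀ (S : Set X) (w : X), S.indicator (1 : X → ℝ≥0∞) w ≤ 1 := by
    intro S w; by_cases h : w ∈ S <;> simp [h]
  have hcne : ∀ k, c k ≠ ⊤ := fun k => ofReal_ne_top
  -- pointwise bound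
  have hpt : ∀ y z, ∑' k, g k y z ≤ ENNReal.ofReal (φ (hyperRho d x y z)) := by
    intro y z
    set M := max (d x y) (d x z) with hMdef
    have hgk : ∀ k, g k y z ≠ 0 → r k ≤ M ∧ M < r (k + 1) := by
      intro k hk
      have h1 : (B k).indicator (1:X→ℝ≥0∞) y * (D k).indicator 1 z ≠ 0 ∨
          (D k).indicator (1:X→ℝ≥0∞) y * (B (k+1)).indicator 1 z ≠ 0 := by
        by_contra h
        push_neg at h
        apply hk
        simp only [hgdef, h.1, h.2, add_zero, mul_zero]
      have hmem : (y ∈ B k ∧ z ∈ D k) ∨ (y ∈ D k ∧ z ∈ B (k+1)) := by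
        rcases h1 with h | h
        · left
          constructor
          · by_contra hy; simp [Set.indicator_of_notMem hy] at h
          · by_contra hz; simp [Set.indicator_of_notMem hz] at h
        · right
          constructor
          · by_contra hy; simp [Set.indicator_of_notMem hy] at h
          · by_contra hz; simp [Set.indicator_of_notMem hz] at h
      rcases hmem with ⟨hy, hz⟩ | ⟨hy, hz⟩
      · have hz1 : d x z < r (k+1) := hz.1
        have hz2 : ¬ (d x z < r k) := hz.2
        have hy1 : d x y < r k := hy
        exact ⟨le_trans (not_lt.mp hz2) (le_max_right _ _),
          max_lt (lt_trans hy1 (hrlt k)) hz1⟩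
      · have hy1 : d x y < r (k+1) := hy.1
        have hy2 : ¬ (d x y < r k) := hy.2
        have hz1 : d x z < r (k+1) := hz
        exact ⟨le_trans (not_lt.mp hy2) (le_max_left _ _), max_lt hy1 hz1⟩
    by_cases hex : ∃ k, g k y z ≠ 0
    · obtain ⟨k0, hk0⟩ := hex
      obtain ⟨hMlo, hMhi⟩ := hgk k0 hk0
      have hle' : ∀ {m n : ℤ}, r m ≤ M → M < r (n+1) → m ≤ n := by
        intro m n h1 h2
        by_contra hmn
        push_neg at hmn
        exact absurd (le_trans (hrmono (by omega)) h1) (not_le.mpr h2)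
      have huniq : ∀ k, k ≠ k0 → g k y z = 0 := by
        intro k hne
        by_contra hk
        obtain ⟨hlo', hhi'⟩ := hgk k hk
        exact hne (le_antisymm (hle' hlo' hMhi) (hle' hMlo hhi'))
      rw [tsum_eq_single k0 huniq]
      have hgle : g k0 y z ≤ c k0 := by
        by_cases hy : y ∈ B k0
        · have hynd : (D k0).indicator (1:X→ℝ≥0∞) y = 0 :=
            Set.indicator_of_notMem (fun h => h.2 hy) _
          simp only [hgdef, hynd, zero_mul, add_zero]
          calc c k0 * ((B k0).indicator 1 y * (D k0).indicator 1 z)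
              ≤ c k0 * 1 := mul_le_mul_right (mul_le_one' (hind1 _ _) (hind1 _ _)) _
            _ = c k0 := mul_one _
        · have hynd : (B k0).indicator (1:X→ℝ≥0∞) y = 0 := Set.indicator_of_notMem hy _
          simp only [hgdef, hynd, zero_mul, zero_add]
          calc c k0 * ((D k0).indicator 1 y * (B (k0+1)).indicator 1 z)
              ≤ c k0 * 1 := mul_le_mul_right (mul_le_one' (hind1 _ _) (hind1 _ _)) _
            _ = c k0 := mul_one _
      refine le_trans hgle ?_
      -- `c k0 ≤ ofReal (φ ρ)`
      have hNX : Nonempty X := ⟨x⟩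
      have hρle : hyperRho d x y z ≤ M := by
        have hb : BddBelow (Set.range fun u => max (d x u) (max (d y u) (d z u))) := by
          refine ⟨0, ?_⟩
          rintro _ ⟨w, rfl⟩
          exact le_max_of_le_left (hd0 x w)
        have hval : max (d x x) (max (d y x) (d z x)) = M := by
          rw [(hdeq x x).mpr rfl, hdsym y x, hdsym z x]
          exact max_eq_right (le_max_of_le_left (hd0 x y))
        calc hyperRho d x y z ≤ max (d x x) (max (d y x) (d z x)) := ciInf_le hb x
          _ = M := hval
      have hρ0 : 0 ≤ hyperRho d x y z :=
        le_ciInf fun w => le_max_of_le_left (hd0 x w)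
      have hM0 : 0 < M := lt_of_lt_of_le (hrpos k0) hMlo
      have hρpos : 0 < hyperRho d x y z := by
        rcases eq_or_lt_of_le hρ0 with heq0 | h
        · exfalso
          have hε : 0 < M / (2*κ) := by positivity
          have hlt : ⨅ w, max (d x w) (max (d y w) (d z w)) < M / (2*κ) := by
            have : hyperRho d x y z < M / (2*κ) := by rw [← heq0]; exact hε
            simpa [hyperRho] using this
          obtain ⟨w, hw⟩ := exists_lt_of_ciInf_lt hlt
          have h1 : d x w < M/(2*κ) := lt_of_le_of_lt (le_max_left _ _) hw
          have h2 : d y w < M/(2*κ) :=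
            lt_of_le_of_lt (le_trans (le_max_left _ _) (le_max_right _ _)) hw
          have h3 : d z w < M/(2*κ) :=
            lt_of_le_of_lt (le_trans (le_max_right _ _) (le_max_right _ _)) hw
          have hxy : d x y < M := by
            have ht := hdtri x w y
            rw [hdsym w y] at ht
            have : κ * (d x w + d y w) < κ * (M/(2*κ) + M/(2*κ)) :=
              (mul_lt_mul_iff_right₀ hκ0).mpr (by linarith)
            have heqM : κ * (M/(2*κ) + M/(2*κ)) = M := by field_simp; ring
            linarith [ht, this, heqM ▸ this]
          have hxz : d x z < M := by
            have ht := hdtri x w z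
            rw [hdsym w z] at ht
            have : κ * (d x w + d z w) < κ * (M/(2*κ) + M/(2*κ)) :=
              (mul_lt_mul_iff_right₀ hκ0).mpr (by linarith)
            have heqM : κ * (M/(2*κ) + M/(2*κ)) = M := by field_simp; ring
            linarith [ht, this, heqM ▸ this]
          exact lt_irrefl M (max_lt hxy hxz)
        · exact h
      exact ENNReal.ofReal_le_ofReal
        (hφ_mono _ _ hρpos (le_of_lt (lt_of_le_of_lt hρle hMhi)))
    · push_neg at hex
      have : ∑' k, g k y z = 0 := by simp only [hex, tsum_zero]
      rw [this]
      exact bot_le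
  -- inner and outer integral computations
  have hin : ∀ k y, ∫⁻ z, g k y z ∂μ =
      c k * ((B k).indicator 1 y * μ (D k) + (D k).indicator 1 y * μ (B (k+1))) := by
    intro k y
    simp only [hgdef]
    rw [lintegral_const_mul' _ _ (hcne k)]
    congr 1
    rw [lintegral_add_left ((measurable_one.indicator (hDm k)).const_mul _)]
    congr 1
    · rw [lintegral_const_mul' _ _ (ne_top_of_le_ne_top one_ne_top (hind1 _ _)),
        lintegral_indicator_one (hDm k)]
    · rw [lintegral_const_mul' _ _ (ne_top_of_le_ne_top one_ne_top (hind1 _ _)),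
        lintegral_indicator_one (hBm (k+1))]
  have hout : ∀ k, (∫⁻ y, c k * ((B k).indicator 1 y * μ (D k) +
      (D k).indicator 1 y * μ (B (k+1))) ∂μ) =
      c k * (μ (D k) * (μ (B k) + μ (B (k+1)))) := by
    intro k
    rw [lintegral_const_mul' _ _ (hcne k)]
    congr 1
    rw [lintegral_add_left ((measurable_one.indicator (hBm k)).mul_const _)]
    rw [lintegral_mul_const' _ _ (hDfin k), lintegral_mul_const' _ _ (hBfin (k+1))]
    rw [lintegral_indicator_one (hBm k), lintegral_indicator_one (hDm k)]
    ring
  -- side A : sum of u ≤ double integral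
  have hmeas_outer : ∀ k, Measurable fun y => c k * ((B k).indicator 1 y * μ (D k) +
      (D k).indicator 1 y * μ (B (k+1))) := fun k =>
    (((measurable_one.indicator (hBm k)).mul_const _).add
      ((measurable_one.indicator (hDm k)).mul_const _)).const_mul _
  have hA_side : (∑' k, u k) ≤ ∫⁻ y, ∫⁻ z, ENNReal.ofReal (φ (hyperRho d x y z)) ∂μ ∂μ := by
    calc (∑' k, u k)
        ≤ ∑' k, c k * (μ (D k) * (μ (B k) + μ (B (k+1)))) :=
          Summable.tsum_le_tsum (fun k => by rw [hu_eq k]; exact mul_le_mul_right (hI k) _)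
            ENNReal.summable ENNReal.summable
      _ = ∑' k, ∫⁻ y, c k * ((B k).indicator 1 y * μ (D k) +
            (D k).indicator 1 y * μ (B (k+1))) ∂μ := tsum_congr fun k => (hout k).symm
      _ = ∫⁻ y, ∑' k, c k * ((B k).indicator 1 y * μ (D k) +
            (D k).indicator 1 y * μ (B (k+1))) ∂μ :=
          (lintegral_tsum fun k => (hmeas_outer k).aemeasurable).symm
      _ = ∫⁻ y, ∫⁻ z, (∑' k, g k y z) ∂μ ∂μ := by
          refine lintegral_congr fun y => ?_
          rw [lintegral_tsum]
          · exact tsum_congr fun k => (hin k y).symm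
          · intro k
            exact ((((measurable_one.indicator (hDm k)).const_mul _).add
              ((measurable_one.indicator (hBm (k+1))).const_mul _)).const_mul _).aemeasurable
      _ ≤ ∫⁻ y, ∫⁻ z, ENNReal.ofReal (φ (hyperRho d x y z)) ∂μ ∂μ :=
          lintegral_mono fun y => lintegral_mono fun z => hpt y z
  -- side B : constant times the radial integral ≤ sum of u
  have hcover : Set.Ioi (0:ℝ) = ⋃ k : ℤ, Set.Ico (r k) (r (k+1)) := by
    ext t
    simp only [Set.mem_Ioi, Set.mem_iUnion, Set.mem_Ico]
    constructor
    · intro ht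
      simpa using exists_mem_Ico_zpow ht hL1
    · rintro ⟨k, h1, h2⟩
      exact lt_of_lt_of_le (hrpos k) h1
  have hdisj : Pairwise (Function.onFun Disjoint fun k : ℤ => Set.Ico (r k) (r (k+1))) := by
    have key : ∀ {k m : ℤ}, k < m →
        Disjoint (Set.Ico (r k) (r (k+1))) (Set.Ico (r m) (r (m+1))) := by
      intro k m h
      apply Set.disjoint_left.mpr
      rintro t ⟨_, h2⟩ ⟨h3, _⟩
      exact absurd (lt_of_lt_of_le h2 (hrmono (by omega))) (not_lt.mpr h3)
    intro k m hkm
    rcases lt_or_gt_of_ne hkm with h | h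
    · exact key h
    · exact (key h).symm
  have hsplit : (∫⁻ t in Set.Ioi (0:ℝ), ENNReal.ofReal (φ t * t ^ (2*η - 1))) =
      ∑' k : ℤ, ∫⁻ t in Set.Ico (r k) (r (k+1)), ENNReal.ofReal (φ t * t ^ (2*η - 1)) := by
    rw [hcover, lintegral_iUnion (fun k => measurableSet_Ico) hdisj]
  have hJ : ∀ k, (∫⁻ t in Set.Ico (r k) (r (k+1)), ENNReal.ofReal (φ t * t ^ (2*η - 1))) ≤
      ENNReal.ofReal (φ (r k) * ((r (k+1) ^ (2*η) - r k ^ (2*η)) / (2*η))) := by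
    intro k
    have h0k : (0:ℝ) ≤ φ (r k) := hφ_nonneg _ (hrpos k)
    have hb1 : (∫⁻ t in Set.Ico (r k) (r (k+1)), ENNReal.ofReal (φ t * t ^ (2*η - 1))) ≤
        ∫⁻ t in Set.Ico (r k) (r (k+1)), ENNReal.ofReal (φ (r k) * t ^ (2*η - 1)) := by
      apply setLIntegral_mono' measurableSet_Ico
      intro t ht
      apply ENNReal.ofReal_le_ofReal
      have htpos : 0 < t := lt_of_lt_of_le (hrpos k) ht.1
      exact mul_le_mul_of_nonneg_right (hφ_mono _ _ (hrpos k) ht.1)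
        (Real.rpow_nonneg htpos.le _)
    refine le_trans hb1 (le_of_eq ?_)
    have hcont : ContinuousOn (fun t : ℝ => φ (r k) * t ^ (2*η - 1))
        (Set.Icc (r k) (r (k+1))) := by
      refine ContinuousOn.mul continuousOn_const ?_
      exact ContinuousOn.rpow_const continuousOn_id
        (fun t ht => Or.inl (ne_of_gt (lt_of_lt_of_le (hrpos k) ht.1)))
    have hint : IntegrableOn (fun t : ℝ => φ (r k) * t ^ (2*η - 1))
        (Set.Ioc (r k) (r (k+1))) volume :=
      (hcont.integrableOn_Icc).mono_set Set.Ioc_subset_Icc_self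
    rw [setLIntegral_congr Ico_ae_eq_Ioc, ← ofReal_integral_eq_lintegral_ofReal hint]
    · congr 1
      rw [MeasureTheory.integral_const_mul, ← intervalIntegral.integral_of_le (hrlt k).le,
        integral_rpow (Or.inl (by linarith : (-1:ℝ) < 2*η - 1))]
      have he : 2*η - 1 + 1 = 2*η := by ring
      rw [he]
    · refine (ae_restrict_iff' measurableSet_Ioc).mpr (ae_of_all _ fun t ht => ?_)
      exact mul_nonneg h0k
        (Real.rpow_nonneg (le_of_lt (lt_trans (hrpos k) ht.1)) _)
  have hB_side : ENNReal.ofReal (1 / (l ^ (4*η) * Real.log l)) *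
      (∫⁻ t in Set.Ioi (0:ℝ), ENNReal.ofReal (φ t * t ^ (2*η - 1))) ≤ ∑' k, u k := by
    rw [hsplit, ← ENNReal.tsum_mul_left]
    have hterm : ∀ k : ℤ, ENNReal.ofReal (1 / (l ^ (4*η) * Real.log l)) *
        (∫⁻ t in Set.Ico (r k) (r (k+1)), ENNReal.ofReal (φ t * t ^ (2*η - 1))) ≤
        u (k - 1) := by
      intro k
      refine le_trans (mul_le_mul_right (hJ k) _) ?_
      rw [← ENNReal.ofReal_mul (by positivity)]
      have hk1 : (k:ℤ) - 1 + 1 = k := by ring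
      have hu1 : u (k - 1) = ENNReal.ofReal (φ (r k) * r (k-1) ^ (2*η)) := by
        simp only [hudef, hk1]
      rw [hu1]
      apply ENNReal.ofReal_le_ofReal
      -- real inequality
      have hRpos : 0 < r (k-1) ^ (2*η) := Real.rpow_pos_of_pos (hrpos _) _
      have e1 : r k ^ (2*η) = r (k-1) ^ (2*η) * l ^ (2*η) := by
        have : r k = r (k-1) * l := by rw [← hrsucc (k-1), hk1]
        rw [this, Real.mul_rpow (hrpos _).le hl0.le]
      have e2 : r (k+1) ^ (2*η) = r (k-1) ^ (2*η) * l ^ (2*η) * l ^ (2*η) := by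
        rw [hrsucc k, Real.mul_rpow (hrpos k).le hl0.le, e1]
      have e3 : l ^ (4*η) = l ^ (2*η) * l ^ (2*η) := by
        rw [← Real.rpow_add hl0]; ring_nf
      rw [e1, e2, e3]
      have hslog : l ^ (2*η) - 1 ≤ l ^ (2*η) * (2*η*Real.log l) := by
        have hlg : (2:ℝ)*η*Real.log l = Real.log (l ^ (2*η)) := (Real.log_rpow hl0 _).symm
        rw [hlg]
        exact aux_log _ hs1
      have h0k' : (0:ℝ) ≤ φ (r k) := hφ_nonneg _ (hrpos k)
      exact aux_main η (φ (r k)) (r (k-1) ^ (2*η)) (l ^ (2*η)) (Real.log l)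
        hη hRpos h0k' hlogl hs1 hslog
    calc (∑' k : ℤ, ENNReal.ofReal (1 / (l ^ (4*η) * Real.log l)) *
          ∫⁻ t in Set.Ico (r k) (r (k+1)), ENNReal.ofReal (φ t * t ^ (2*η - 1)))
        ≤ ∑' k : ℤ, u (k - 1) := Summable.tsum_le_tsum hterm ENNReal.summable ENNReal.summable
      _ = ∑' k, u k := (Equiv.subRight (1:ℤ)).tsum_eq u
  exact le_trans hB_side hA_side
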